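/- Let K = HahnSeries ℚ ℂ, let A be an m × n matrix over K and b ∈ K^m, all of whose entries have integer support, and let v ∈ ℚ^n. Let Cs ⊆ ℚ be a finite set of representatives such that: (i) distinct elements of Cs are incongruent modulo ℤ, (ii) some element of Cs is an integer, and (iii) every coordinate v_j is congruent modulo ℤ to some element of Cs. Then the following are equivalent: (1) there exists x ∈ K^n with A.mulVec x = b and Trop(x_j) = v_j for all j; (2) for every c ∈ Cs there exists y^{(c)} ∈ K^n such that A.mulVec y^{(c)} = R_c b, every (y^{(c)})_j has support contained in {s ∈ ℚ : s − c ∈ ℤ}, Trop((y^{(c)})_j) = v_j for every j with v_j − c ∈ ℤ, and Trop((y^{(c)})_j) > v_j for every j with v_j − c ∉ ℤ. -/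

import Mathlib

open scoped Classical in
/-- The coset restriction `R_c : HahnSeries ℚ ℂ → HahnSeries ℚ ℂ` keeping only the
coefficients at exponents congruent to `c` modulo `ℤ`. -/
noncomputable def cosetRestrict (c : ℚ) (x : HahnSeries ℚ ℂ) : HahnSeries ℚ ℂ where
  coeff s := if ∃ k : ℤ, s - c = (k : ℚ) then x.coeff s else 0
  isPWO_support' := x.isPWO_support'.mono (by
    intro s hs
    simp only [Function.mem_support, ne_eq] at hs ⊢
    intro h
    apply hs
    split_ifs <;> simp [h])

open scoped Classical

lemma cosetRestrict_coeff (c : ℚ) (x : HahnSeries ℚ ℂ) (s : ℚ) :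
    (cosetRestrict c x).coeff s = if ∃ k : ℤ, s - c = (k : ℚ) then x.coeff s else 0 := rfl

lemma cosetRestrict_support (c : ℚ) (x : HahnSeries ℚ ℂ) :
    (cosetRestrict c x).support ⊆ x.support := by
  intro s hs
  rw [HahnSeries.mem_support] at hs ⊢
  intro h0
  apply hs
  rw [cosetRestrict_coeff]
  split_ifs <;> simp [h0]

lemma cosetRestrict_support_coset (c : ℚ) (x : HahnSeries ℚ ℂ) :
    (cosetRestrict c x).support ⊆ {s : ℚ | ∃ k : ℤ, s - c = (k : ℚ)} := by
  intro s hs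
  rw [HahnSeries.mem_support] at hs
  by_contra h
  apply hs
  rw [cosetRestrict_coeff]
  exact if_neg h

lemma cosetRestrict_add (c : ℚ) (x y : HahnSeries ℚ ℂ) :
    cosetRestrict c (x + y) = cosetRestrict c x + cosetRestrict c y := by
  ext s
  simp only [cosetRestrict_coeff, HahnSeries.coeff_add]
  split_ifs <;> simp

lemma cosetRestrict_zero (c : ℚ) : cosetRestrict c (0 : HahnSeries ℚ ℂ) = 0 := by
  ext s
  simp only [cosetRestrict_coeff, HahnSeries.coeff_zero]
  split_ifs <;> rfl

lemma cosetRestrict_sum {ι : Type*} (c : ℚ) (t : Finset ι) (f : ι → HahnSeries ℚ ℂ) :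
    cosetRestrict c (∑ i ∈ t, f i) = ∑ i ∈ t, cosetRestrict c (f i) := by
  induction t using Finset.induction_on with
  | empty => simpa using cosetRestrict_zero c
  | insert _ _ h ih =>
      rw [Finset.sum_insert h, Finset.sum_insert h, cosetRestrict_add, ih]

lemma sum_coeff {ι : Type*} (t : Finset ι) (f : ι → HahnSeries ℚ ℂ) (s : ℚ) :
    (∑ i ∈ t, f i).coeff s = ∑ i ∈ t, (f i).coeff s := by
  induction t using Finset.induction_on with
  | empty => simp
  | insert _ _ h ih => rw [Finset.sum_insert h, Finset.sum_insert h, HahnSeries.coeff_add, ih]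

lemma cosetRestrict_mul (c : ℚ) (a x : HahnSeries ℚ ℂ)
    (ha : ∀ s ∈ a.support, ∃ k : ℤ, s = (k : ℚ)) :
    cosetRestrict c (a * x) = a * cosetRestrict c x := by
  ext s
  rw [cosetRestrict_coeff,
    HahnSeries.coeff_mul_right' x.isPWO_support (cosetRestrict_support c x)]
  by_cases hs : ∃ k : ℤ, s - c = (k : ℚ)
  · rw [if_pos hs, HahnSeries.coeff_mul]
    refine Finset.sum_congr rfl fun ij hij => ?_
    rw [Finset.mem_addAntidiagonal] at hij
    congr 1
    rw [cosetRestrict_coeff, if_pos]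
    obtain ⟨k, hk⟩ := hs
    obtain ⟨k', hk'⟩ := ha _ hij.1
    refine ⟨k - k', ?_⟩
    push_cast
    rw [← hk, ← hk']
    have := hij.2.2
    linarith
  · rw [if_neg hs]
    symm
    refine Finset.sum_eq_zero fun ij hij => ?_
    rw [Finset.mem_addAntidiagonal] at hij
    rw [cosetRestrict_coeff, if_neg, mul_zero]
    rintro ⟨k, hk⟩
    obtain ⟨k', hk'⟩ := ha _ hij.1
    refine hs ⟨k + k', ?_⟩
    push_cast
    rw [← hk, ← hk']
    have := hij.2.2
    linarith

lemma cosetRestrict_eq_self (c : ℚ) (x : HahnSeries ℚ ℂ)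
    (hx : ∀ s ∈ x.support, ∃ k : ℤ, s = (k : ℚ)) (hc : ∃ k : ℤ, c = (k : ℚ)) :
    cosetRestrict c x = x := by
  ext s
  rw [cosetRestrict_coeff]
  split_ifs with h
  · rfl
  · by_contra hne
    obtain ⟨k, hk⟩ := hx s (by simpa [Function.mem_support] using fun h0 => hne h0.symm)
    obtain ⟨k', hk'⟩ := hc
    exact h ⟨k - k', by push_cast; rw [← hk, ← hk']⟩

lemma cosetRestrict_eq_zero (c : ℚ) (x : HahnSeries ℚ ℂ)
    (hx : ∀ s ∈ x.support, ∃ k : ℤ, s = (k : ℚ)) (hc : ¬ ∃ k : ℤ, c = (k : ℚ)) :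
    cosetRestrict c x = 0 := by
  ext s
  rw [cosetRestrict_coeff, HahnSeries.coeff_zero]
  split_ifs with h
  · by_contra hne
    obtain ⟨k, hk⟩ := hx s (by simpa [Function.mem_support] using hne)
    obtain ⟨k', hk'⟩ := h
    exact hc ⟨k - k', by push_cast; rw [← hk', ← hk]; ring⟩
  · rfl

lemma lt_orderTop_of_support (x : HahnSeries ℚ ℂ) (v : ℚ)
    (h : ∀ s ∈ x.support, v < s) : (v : WithTop ℚ) < x.orderTop := by
  by_cases hx : x = 0
  · simp [hx, HahnSeries.orderTop_zero]
  · rw [HahnSeries.orderTop_of_ne_zero hx, WithTop.coe_lt_coe]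
    exact h _ (x.isWF_support.min_mem _)

/-- For a system `A.mulVec x = b` with integer-support entries and a target
vector `v ∈ ℚ^n`, solvability with `Trop (x j) = v j` is equivalent to the simultaneous
solvability, for each congruence-class representative `c` in a set `Cs` (pairwise
incongruent mod `ℤ`, containing an integer, and meeting every class of some `v j`),
of the restricted system `A.mulVec y = R_c b` by a vector `y` supported in the coset
`c + ℤ` with `Trop (y j) = v j` when `v j ≡ c (mod ℤ)` and `Trop (y j) > v j` otherwise. -/
theorem trop_solvable_iff_congruence_classes (m n : ℕ)
    (A : Matrix (Fin m) (Fin n) (HahnSeries ℚ ℂ)) (b : Fin m → HahnSeries ℚ ℂ)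
    (hA : ∀ i j, ∀ s ∈ (A i j).support, ∃ k : ℤ, s = (k : ℚ))
    (hb : ∀ i, ∀ s ∈ (b i).support, ∃ k : ℤ, s = (k : ℚ))
    (v : Fin n → ℚ) (Cs : Finset ℚ)
    (hCs₁ : ∀ c ∈ Cs, ∀ c' ∈ Cs, (∃ k : ℤ, c - c' = (k : ℚ)) → c = c')
    (hCs₂ : ∃ c ∈ Cs, ∃ k : ℤ, c = (k : ℚ))
    (hCs₃ : ∀ j, ∃ c ∈ Cs, ∃ k : ℤ, v j - c = (k : ℚ)) :
    (∃ x : Fin n → HahnSeries ℚ ℂ, A.mulVec x = b ∧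
        ∀ j, (x j).orderTop = (v j : WithTop ℚ)) ↔
    (∀ c ∈ Cs, ∃ y : Fin n → HahnSeries ℚ ℂ,
        A.mulVec y = (fun i => cosetRestrict c (b i)) ∧
        (∀ j, (y j).support ⊆ {s : ℚ | ∃ k : ℤ, s - c = (k : ℚ)}) ∧
        (∀ j, (∃ k : ℤ, v j - c = (k : ℚ)) → (y j).orderTop = (v j : WithTop ℚ)) ∧
        (∀ j, ¬ (∃ k : ℤ, v j - c = (k : ℚ)) → (v j : WithTop ℚ) < (y j).orderTop)) := by
  constructor
  · rintro ⟨x, hAx, hord⟩ c _hc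
    refine ⟨fun j => cosetRestrict c (x j), ?_, ?_, ?_, ?_⟩
    · funext i
      have : A.mulVec (fun j => cosetRestrict c (x j)) i
          = cosetRestrict c (A.mulVec x i) := by
        simp only [Matrix.mulVec, dotProduct, cosetRestrict_sum]
        exact Finset.sum_congr rfl fun j _ => (cosetRestrict_mul c (A i j) (x j) (hA i j)).symm
      rw [this, hAx]
    · exact fun j => cosetRestrict_support_coset c (x j)
    · intro j hj
      apply HahnSeries.orderTop_eq_of_le
      · show v j ∈ (cosetRestrict c (x j)).support
        rw [HahnSeries.mem_support, cosetRestrict_coeff, if_pos hj]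
        exact HahnSeries.coeff_orderTop_ne (hord j)
      · intro s hs
        have hs' : s ∈ (x j).support := cosetRestrict_support c (x j) hs
        have := HahnSeries.orderTop_le_of_coeff_ne_zero hs'
        rw [hord j, WithTop.coe_le_coe] at this
        exact this
    · intro j hj
      apply lt_orderTop_of_support
      intro s hs
      have hs' : s ∈ (x j).support := cosetRestrict_support c (x j) hs
      have hle : v j ≤ s := by
        have := HahnSeries.orderTop_le_of_coeff_ne_zero hs'
        rw [hord j, WithTop.coe_le_coe] at this
        exact this
      rcases lt_or_eq_of_le hle with h | h
      · exact h
      · exfalso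
        obtain ⟨k, hk⟩ := cosetRestrict_support_coset c (x j) hs
        exact hj ⟨k, by rw [h]; exact hk⟩
  · intro h
    choose y hy1 hy2 hy3 hy4 using h
    refine ⟨fun j => ∑ c ∈ Cs.attach, y c.1 c.2 j, ?_, ?_⟩
    · funext i
      have hswap : A.mulVec (fun j => ∑ c ∈ Cs.attach, y c.1 c.2 j) i
          = ∑ c ∈ Cs.attach, A.mulVec (y c.1 c.2) i := by
        simp only [Matrix.mulVec, dotProduct, Finset.mul_sum]
        rw [Finset.sum_comm]
      rw [hswap]
      have : ∀ c ∈ Cs.attach, A.mulVec (y c.1 c.2) i = cosetRestrict c.1 (b i) := by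
        intro c _
        rw [hy1 c.1 c.2]
      rw [Finset.sum_congr rfl this]
      rw [Finset.sum_attach Cs (fun c => cosetRestrict c (b i))]
      obtain ⟨c₀, hc₀Cs, hc₀⟩ := hCs₂
      rw [Finset.sum_eq_single c₀]
      · exact cosetRestrict_eq_self c₀ (b i) (hb i) hc₀
      · intro c hc hne
        apply cosetRestrict_eq_zero c (b i) (hb i)
        rintro ⟨k, hk⟩
        obtain ⟨k', hk'⟩ := hc₀
        exact hne (hCs₁ c hc c₀ hc₀Cs ⟨k - k', by push_cast; rw [← hk, ← hk']⟩)
      · intro h'; exact absurd hc₀Cs h'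
    · intro j
      obtain ⟨c₀, hc₀Cs, hc₀⟩ := hCs₃ j
      have key : ∀ c (hc : c ∈ Cs), c ≠ c₀ → ¬ ∃ k : ℤ, v j - c = (k : ℚ) := by
        intro c hc hne hcong
        obtain ⟨k, hk⟩ := hcong
        obtain ⟨k', hk'⟩ := hc₀
        exact hne (hCs₁ c hc c₀ hc₀Cs ⟨k' - k, by push_cast; rw [← hk, ← hk']; ring⟩)
      apply HahnSeries.orderTop_eq_of_le
      · show v j ∈ (∑ c ∈ Cs.attach, y c.1 c.2 j).support
        rw [HahnSeries.mem_support]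
        have hco : (∑ c ∈ Cs.attach, y c.1 c.2 j).coeff (v j)
            = (y c₀ hc₀Cs j).coeff (v j) := by
          rw [sum_coeff]
          refine Finset.sum_eq_single_of_mem (⟨c₀, hc₀Cs⟩ : {x // x ∈ Cs})
            (Finset.mem_attach _ _) ?_
          intro c _ hne
          exact HahnSeries.coeff_eq_zero_of_lt_orderTop
            (hy4 c.1 c.2 j (key c.1 c.2 (fun h => hne (Subtype.ext h))))
        rw [hco]
        exact HahnSeries.coeff_orderTop_ne (hy3 c₀ hc₀Cs j hc₀)
      · intro s hs
        rw [HahnSeries.mem_support] at hs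
        by_contra hlt
        push_neg at hlt
        apply hs
        rw [sum_coeff]
        refine Finset.sum_eq_zero fun c _ => ?_
        apply HahnSeries.coeff_eq_zero_of_lt_orderTop
        by_cases hcong : ∃ k : ℤ, v j - c.1 = (k : ℚ)
        · rw [hy3 c.1 c.2 j hcong, WithTop.coe_lt_coe]; exact hlt
        · exact lt_trans (WithTop.coe_lt_coe.mpr hlt) (hy4 c.1 c.2 j hcong)
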